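/- arXiv:1411.2544 — 2 statements merged into one kernel-verified Lean document; each statement's English description precedes it below -/
import Mathlib

section
/- For n ≥ 2, the Randić energy of the friendship graph F_n equals n + 1. -/
open scoped Classical
open Polynomial

/-- The Randić matrix of a simple graph: entry `1/√(dᵢ dⱼ)` for adjacent
vertices `vᵢ ∼ vⱼ` and `0` otherwise. -/
noncomputable def randicMatrix {V : Type*} [Fintype V] (G : SimpleGraph V) : Matrix V V ℝ :=
  fun i j => if G.Adj i j then 1 / Real.sqrt ((G.degree i : ℝ) * (G.degree j : ℝ)) else 0

/-- The Randić energy: the sum of the absolute values of the eigenvalues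
of the Randić matrix. -/
noncomputable def randicEnergy {V : Type*} [Fintype V] [DecidableEq V] (G : SimpleGraph V) : ℝ :=
  if h : (randicMatrix G).IsHermitian then ∑ i, |h.eigenvalues i| else 0

/-- The friendship graph `F n`: `n` triangles sharing the common vertex `none`. -/
def friendshipGraph (n : ℕ) : SimpleGraph (Option (Fin n × Fin 2)) where
  Adj x y := (x = none ∧ y ≠ none) ∨ (y = none ∧ x ≠ none) ∨
    (∃ i a b, a ≠ b ∧ x = some (i, a) ∧ y = some (i, b))
  symm := by
    refine ⟨?_⟩; rintro x y (⟨h1, h2⟩ | ⟨h1, h2⟩ | ⟨i, a, b, hab, hx, hy⟩)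
    · exact Or.inr (Or.inl ⟨h1, h2⟩)
    · exact Or.inl ⟨h1, h2⟩
    · exact Or.inr (Or.inr ⟨i, b, a, hab.symm, hy, hx⟩)
  loopless := by
    refine ⟨?_⟩; rintro x (⟨h1, h2⟩ | ⟨h1, h2⟩ | ⟨i, a, b, hab, hx, hy⟩)
    · exact h2 h1
    · exact h2 h1
    · rw [hx] at hy; simp at hy; exact hab hy



lemma fg_adj (n : ℕ) (x y : Option (Fin n × Fin 2)) :
    (friendshipGraph n).Adj x y ↔ (x = none ∧ y ≠ none) ∨ (y = none ∧ x ≠ none) ∨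
    (∃ i a b, a ≠ b ∧ x = some (i, a) ∧ y = some (i, b)) := Iff.rfl

lemma fg_adj_none_some (n : ℕ) (p : Fin n × Fin 2) :
    (friendshipGraph n).Adj none (some p) := Or.inl ⟨rfl, by simp⟩

lemma fg_adj_some_some (n : ℕ) (i j : Fin n) (a b : Fin 2) :
    (friendshipGraph n).Adj (some (i,a)) (some (j,b)) ↔ i = j ∧ a ≠ b := by
  rw [fg_adj]
  constructor
  · rintro (⟨h,-⟩ | ⟨h,-⟩ | ⟨k,c,d,hcd,hx,hy⟩)
    · simp at h
    · simp at h
    · obtain ⟨rfl, rfl⟩ : i = k ∧ a = c := by simpa using hx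
      obtain ⟨rfl, rfl⟩ : j = i ∧ b = d := by simpa using hy
      exact ⟨rfl, hcd⟩
  · rintro ⟨rfl, hab⟩
    exact Or.inr (Or.inr ⟨i, a, b, hab, rfl, rfl⟩)

lemma fg_deg_none (n : ℕ) : (friendshipGraph n).degree none = 2 * n := by
  classical
  rw [← SimpleGraph.card_neighborFinset_eq_degree]
  have h : (friendshipGraph n).neighborFinset none
      = Finset.univ.image (fun p : Fin n × Fin 2 => some p) := by
    ext x
    rw [SimpleGraph.mem_neighborFinset, fg_adj]
    constructor
    · rintro (⟨h1, h2⟩ | ⟨h1, h2⟩ | ⟨i,a,b,hab,hx,hy⟩)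
      · obtain ⟨p, rfl⟩ := Option.ne_none_iff_exists'.mp h2
        simp
      · exact absurd rfl h2
      · subst hy; simp
    · intro hx
      simp only [Finset.mem_image, Finset.mem_univ, true_and] at hx
      obtain ⟨p, rfl⟩ := hx
      exact Or.inl ⟨rfl, by simp⟩
  rw [h, Finset.card_image_of_injective _ (Option.some_injective _)]
  simp [two_mul]; ring

lemma fg_deg_some (n : ℕ) (i : Fin n) (a : Fin 2) :
    (friendshipGraph n).degree (some (i, a)) = 2 := by
  classical
  rw [← SimpleGraph.card_neighborFinset_eq_degree]
  have h : (friendshipGraph n).neighborFinset (some (i,a)) = {none, some (i, a + 1)} := by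
    ext x
    rw [SimpleGraph.mem_neighborFinset]
    constructor
    · intro hx
      rcases hx with ⟨h1, h2⟩ | ⟨h1, h2⟩ | ⟨j,c,b,hcb,hxx,hy⟩
      · simp at h1
      · simp [h1]
      · obtain ⟨rfl, rfl⟩ : i = j ∧ a = c := by simpa using hxx
        subst hy
        have hb : b = a + 1 := by omega
        simp [hb]
    · intro hx
      simp only [Finset.mem_insert, Finset.mem_singleton] at hx
      rcases hx with rfl | rfl
      · exact Or.inr (Or.inl ⟨rfl, by simp⟩)
      · exact Or.inr (Or.inr ⟨i, a, a+1, by omega, rfl, rfl⟩)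
  rw [h, Finset.card_insert_of_notMem (by simp), Finset.card_singleton]



noncomputable def Mn (n : ℕ) : Matrix (Option (Fin n × Fin 2)) (Option (Fin n × Fin 2)) ℝ :=
  fun x y =>
    match x, y with
    | none, none => 0
    | none, some _ => 1 / Real.sqrt (4 * n)
    | some _, none => 1 / Real.sqrt (4 * n)
    | some (i, a), some (j, b) => if i = j ∧ a ≠ b then 1 / 2 else 0

lemma randic_eq_Mn (n : ℕ) (hn : 1 ≤ n) : randicMatrix (friendshipGraph n) = Mn n := by
  ext x y
  match x, y with
  | none, none =>
      rw [randicMatrix]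
      rw [if_neg ((friendshipGraph n).loopless.irrefl none)]
      rfl
  | none, some p =>
      rw [randicMatrix]
      simp only [Mn, if_pos (fg_adj_none_some n p)]
      obtain ⟨i, a⟩ := p
      rw [fg_deg_none, fg_deg_some]
      push_cast
      rw [show (2*(n:ℝ))*2 = 4*n by ring]
  | some p, none =>
      rw [randicMatrix]
      have := ((friendshipGraph n).adj_symm (fg_adj_none_some n p))
      simp only [Mn, if_pos this]
      obtain ⟨i, a⟩ := p
      rw [fg_deg_some, fg_deg_none]
      push_cast
      rw [show (2:ℝ)*(2*n) = 4*n by ring]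
  | some (i,a), some (j,b) =>
      rw [randicMatrix]
      by_cases h : i = j ∧ a ≠ b
      · rw [if_pos ((fg_adj_some_some n i j a b).mpr h)]
        simp only [Mn, if_pos h]
        rw [fg_deg_some, fg_deg_some]
        push_cast
        rw [show (2:ℝ)*2 = 2^2 by norm_num, Real.sqrt_sq (by norm_num)]
      · rw [if_neg (fun hadj => h ((fg_adj_some_some n i j a b).mp hadj))]
        simp only [Mn, if_neg h]


noncomputable def M2n (n : ℕ) : Matrix (Option (Fin n × Fin 2)) (Option (Fin n × Fin 2)) ℝ :=
  fun x y =>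
    match x, y with
    | none, none => 1 / 2
    | none, some _ => 1 / Real.sqrt (4 * n) / 2
    | some _, none => 1 / Real.sqrt (4 * n) / 2
    | some (i, a), some (j, b) => 1 / (4 * n) + if i = j ∧ a = b then 1 / 4 else 0

lemma alpha_sq (n : ℕ) (hn : 1 ≤ n) :
    (1 / Real.sqrt (4 * n)) * (1 / Real.sqrt (4 * n)) = 1 / (4 * n) := by
  rw [div_mul_div_comm, one_mul, Real.mul_self_sqrt (by positivity)]

lemma sum2_ne (j : Fin 2) (c : ℝ) : (∑ a : Fin 2, if a ≠ j then c else 0) = c := by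
  fin_cases j <;> simp [Fin.sum_univ_two]

lemma sum2_ne' (j : Fin 2) (c : ℝ) : (∑ a : Fin 2, if j ≠ a then c else 0) = c := by
  fin_cases j <;> simp [Fin.sum_univ_two]

lemma fin2_other {a c : Fin 2} (h : ¬ c = a) : a ≠ c := fun hh => h hh.symm

lemma M2_eq (n : ℕ) (hn : 1 ≤ n) : Mn n * Mn n = M2n n := by
  have hα := alpha_sq n hn
  have hn' : (n : ℝ) ≠ 0 := Nat.cast_ne_zero.mpr (by omega)
  ext x y
  rw [Matrix.mul_apply, Fintype.sum_option, Fintype.sum_prod_type]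
  match x, y with
  | none, none =>
      show (0 * 0 + ∑ i : Fin n, ∑ a : Fin 2,
        (1 / Real.sqrt (4*n)) * (1 / Real.sqrt (4*n))) = 1/2
      rw [hα]
      simp [Finset.sum_const]
      field_simp
      ring
  | none, some (j, b) =>
      show (0 * (1 / Real.sqrt (4*n)) + ∑ i : Fin n, ∑ a : Fin 2,
        (1 / Real.sqrt (4*n)) * (if i = j ∧ a ≠ b then 1/2 else 0)) = 1 / Real.sqrt (4*n) / 2
      rw [zero_mul, zero_add]
      have hout : ∀ i : Fin n, (∑ a : Fin 2, (1 / Real.sqrt (4*n)) * (if i = j ∧ a ≠ b then 1/2 else 0))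
          = if i = j then (1 / Real.sqrt (4*n)) * (1/2) else 0 := by
        intro i
        by_cases h : i = j
        · subst h
          rw [if_pos rfl]
          have hin : ∀ a : Fin 2, (1 / Real.sqrt (4*n)) * (if i = i ∧ a ≠ b then 1/2 else 0)
              = if a ≠ b then (1 / Real.sqrt (4*n)) * (1/2) else 0 := by
            intro a
            by_cases hc : a = b
            · rw [if_neg (fun h => (h.2 hc)), if_neg (fun h => h hc), mul_zero]
            · rw [if_pos ⟨rfl, hc⟩, if_pos hc]
          rw [Finset.sum_congr rfl (fun a _ => hin a), sum2_ne b]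
        · rw [if_neg h]
          have hin : ∀ a : Fin 2, (1 / Real.sqrt (4*n)) * (if i = j ∧ a ≠ b then 1/2 else 0) = 0 := by
            intro a; rw [if_neg (fun hh => h hh.1), mul_zero]
          rw [Finset.sum_congr rfl (fun a _ => hin a), Finset.sum_const, smul_zero]
      rw [Finset.sum_congr rfl (fun i _ => hout i),
        Finset.sum_ite_eq' Finset.univ j (fun _ => (1 / Real.sqrt (4*n)) * (1/2)),
        if_pos (Finset.mem_univ j)]
      ring
  | some (i, a), none =>
      show ((1 / Real.sqrt (4*n)) * 0 + ∑ k : Fin n, ∑ c : Fin 2,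
        (if i = k ∧ a ≠ c then 1/2 else 0) * (1 / Real.sqrt (4*n))) = 1 / Real.sqrt (4*n) / 2
      rw [mul_zero, zero_add]
      have hout : ∀ k : Fin n, (∑ c : Fin 2, (if i = k ∧ a ≠ c then 1/2 else 0) * (1 / Real.sqrt (4*n)))
          = if k = i then (1/2) * (1 / Real.sqrt (4*n)) else 0 := by
        intro k
        by_cases h : k = i
        · subst h
          rw [if_pos rfl]
          have hin : ∀ c : Fin 2, (if k = k ∧ a ≠ c then (1:ℝ)/2 else 0) * (1 / Real.sqrt (4*n))
              = if c ≠ a then (1/2) * (1 / Real.sqrt (4*n)) else 0 := by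
            intro c
            by_cases hc : c = a
            · rw [if_neg (fun h => h.2 hc.symm), if_neg (fun h => h hc), zero_mul]
            · rw [if_pos ⟨rfl, fin2_other hc⟩, if_pos hc]
          rw [Finset.sum_congr rfl (fun c _ => hin c), sum2_ne a]
        · rw [if_neg h]
          have hin : ∀ c : Fin 2, (if i = k ∧ a ≠ c then (1:ℝ)/2 else 0) * (1 / Real.sqrt (4*n)) = 0 := by
            intro c; rw [if_neg (fun hh => h hh.1.symm), zero_mul]
          rw [Finset.sum_congr rfl (fun c _ => hin c), Finset.sum_const, smul_zero]
      rw [Finset.sum_congr rfl (fun k _ => hout k),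
        Finset.sum_ite_eq' Finset.univ i (fun _ => (1/2) * (1 / Real.sqrt (4*n))),
        if_pos (Finset.mem_univ i)]
      ring
  | some (i, a), some (j, b) =>
      show ((1 / Real.sqrt (4*n)) * (1 / Real.sqrt (4*n)) + ∑ k : Fin n, ∑ c : Fin 2,
        (if i = k ∧ a ≠ c then 1/2 else 0) * (if k = j ∧ c ≠ b then 1/2 else 0))
        = 1 / (4*n) + if i = j ∧ a = b then 1/4 else 0
      rw [hα]
      congr 1
      have hout : ∀ k : Fin n, (∑ c : Fin 2,
          (if i = k ∧ a ≠ c then (1:ℝ)/2 else 0) * (if k = j ∧ c ≠ b then 1/2 else 0))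
          = if k = i then (if i = j ∧ a = b then 1/4 else 0) else 0 := by
        intro k
        by_cases hk : k = i
        · subst hk
          rw [if_pos rfl]
          by_cases hij : k = j
          · subst hij
            by_cases hab : a = b
            · subst hab
              rw [if_pos ⟨rfl, rfl⟩]
              have hin : ∀ c : Fin 2, (if k = k ∧ a ≠ c then (1:ℝ)/2 else 0) * (if k = k ∧ c ≠ a then 1/2 else 0)
                  = if c ≠ a then 1/4 else 0 := by
                intro c
                by_cases hc : c = a
                · rw [if_neg (show ¬(k = k ∧ a ≠ c) from fun h => h.2 hc.symm), zero_mul,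
                    if_neg (show ¬(c ≠ a) from fun h => h hc)]
                · rw [if_pos ⟨rfl, fin2_other hc⟩, if_pos ⟨rfl, hc⟩, if_pos hc]; norm_num
              rw [Finset.sum_congr rfl (fun c _ => hin c), sum2_ne a]
            · rw [if_neg (show ¬(k = k ∧ a = b) from fun h => hab h.2)]
              have hin : ∀ c : Fin 2, (if k = k ∧ a ≠ c then (1:ℝ)/2 else 0) * (if k = k ∧ c ≠ b then 1/2 else 0) = 0 := by
                intro c
                by_cases hc : c = a
                · rw [if_neg (show ¬(k = k ∧ a ≠ c) from fun h => h.2 hc.symm), zero_mul]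
                · have hcb : c = b := by omega
                  rw [if_neg (show ¬(k = k ∧ c ≠ b) from fun h => h.2 hcb), mul_zero]
              rw [Finset.sum_congr rfl (fun c _ => hin c), Finset.sum_const, smul_zero]
          · rw [if_neg (show ¬(k = j ∧ a = b) from fun h => hij h.1)]
            have hin : ∀ c : Fin 2, (if k = k ∧ a ≠ c then (1:ℝ)/2 else 0) * (if k = j ∧ c ≠ b then 1/2 else 0) = 0 := by
              intro c; rw [if_neg (show ¬(k = j ∧ c ≠ b) from fun h => hij h.1), mul_zero]
            rw [Finset.sum_congr rfl (fun c _ => hin c), Finset.sum_const, smul_zero]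
        · rw [if_neg hk]
          have hin : ∀ c : Fin 2, (if i = k ∧ a ≠ c then (1:ℝ)/2 else 0) * (if k = j ∧ c ≠ b then 1/2 else 0) = 0 := by
            intro c; rw [if_neg (fun hh => hk hh.1.symm), zero_mul]
          rw [Finset.sum_congr rfl (fun c _ => hin c), Finset.sum_const, smul_zero]
      rw [Finset.sum_congr rfl (fun k _ => hout k),
        Finset.sum_ite_eq' Finset.univ i (fun _ => (if i = j ∧ a = b then (1:ℝ)/4 else 0)),
        if_pos (Finset.mem_univ i)]



lemma one_apply_option {n : ℕ} (x y : Option (Fin n × Fin 2)) :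
    (1 : Matrix (Option (Fin n × Fin 2)) (Option (Fin n × Fin 2)) ℝ) x y
      = if x = y then 1 else 0 := Matrix.one_apply

lemma M3_eq (n : ℕ) (hn : 1 ≤ n) :
    Mn n * M2n n = M2n n + (1/4 : ℝ) • Mn n - (1/4 : ℝ) • 1 := by
  have hα := alpha_sq n hn
  have hn' : (n : ℝ) ≠ 0 := Nat.cast_ne_zero.mpr (by omega)
  ext x y
  rw [Matrix.sub_apply, Matrix.add_apply, Matrix.smul_apply, Matrix.smul_apply,
    Matrix.mul_apply, Fintype.sum_option, Fintype.sum_prod_type]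
  match x, y with
  | none, none =>
      show (0 * (1/2) + ∑ i : Fin n, ∑ a : Fin 2,
          (1 / Real.sqrt (4*n)) * (1 / Real.sqrt (4*n) / 2))
        = (1/2) + (1/4 : ℝ) • (0:ℝ) - (1/4 : ℝ) •
          ((1 : Matrix (Option (Fin n × Fin 2)) (Option (Fin n × Fin 2)) ℝ) none none)
      rw [one_apply_option, if_pos rfl]
      have : (1 / Real.sqrt (4*n)) * (1 / Real.sqrt (4*(n:ℝ)) / 2) = 1/(4*n)/2 := by
        rw [← mul_div_assoc, hα]
      rw [Finset.sum_congr rfl (fun i _ => Finset.sum_congr rfl (fun a _ => this))]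
      simp [Finset.sum_const]
      field_simp
      ring
  | none, some (j, b) =>
      show (0 * (1 / Real.sqrt (4*n) / 2) + ∑ i : Fin n, ∑ a : Fin 2,
          (1 / Real.sqrt (4*n)) * (1/(4*n) + if i = j ∧ a = b then 1/4 else 0))
        = (1 / Real.sqrt (4*n) / 2) + (1/4 : ℝ) • (1 / Real.sqrt (4*(n:ℝ))) - (1/4 : ℝ) •
          ((1 : Matrix (Option (Fin n × Fin 2)) (Option (Fin n × Fin 2)) ℝ) none (some (j,b)))
      rw [one_apply_option, if_neg (by simp)]
      rw [zero_mul, zero_add]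
      have hout : ∀ i : Fin n, (∑ a : Fin 2,
          (1 / Real.sqrt (4*n)) * (1/(4*(n:ℝ)) + if i = j ∧ a = b then 1/4 else 0))
          = (1 / Real.sqrt (4*n)) * (2/(4*n)) + (if i = j then (1 / Real.sqrt (4*n)) * (1/4) else 0) := by
        intro i
        by_cases h : i = j
        · subst h
          rw [if_pos rfl, Fin.sum_univ_two]
          by_cases hb : b = 0
          · subst hb; norm_num; ring
          · have hb1 : b = 1 := by omega
            subst hb1; norm_num; ring
        · rw [if_neg h, Fin.sum_univ_two]
          rw [if_neg (fun hh : i = j ∧ (0:Fin 2) = b => h hh.1),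
              if_neg (fun hh : i = j ∧ (1:Fin 2) = b => h hh.1)]
          ring
      rw [Finset.sum_congr rfl (fun i _ => hout i), Finset.sum_add_distrib,
        Finset.sum_ite_eq' Finset.univ j, if_pos (Finset.mem_univ j), Finset.sum_const]
      simp only [Finset.card_univ, Fintype.card_fin, nsmul_eq_mul, smul_eq_mul]
      field_simp
      ring
  | some (i, a), none =>
      show ((1 / Real.sqrt (4*n)) * (1/2) + ∑ k : Fin n, ∑ c : Fin 2,
          (if i = k ∧ a ≠ c then 1/2 else 0) * (1 / Real.sqrt (4*n) / 2))
        = (1 / Real.sqrt (4*n) / 2) + (1/4 : ℝ) • (1 / Real.sqrt (4*(n:ℝ))) - (1/4 : ℝ) •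
          ((1 : Matrix (Option (Fin n × Fin 2)) (Option (Fin n × Fin 2)) ℝ) (some (i,a)) none)
      rw [one_apply_option, if_neg (by simp)]
      have hout : ∀ k : Fin n, (∑ c : Fin 2,
          (if i = k ∧ a ≠ c then (1:ℝ)/2 else 0) * (1 / Real.sqrt (4*n) / 2))
          = if k = i then (1/2) * (1 / Real.sqrt (4*(n:ℝ)) / 2) else 0 := by
        intro k
        by_cases h : k = i
        · subst h
          rw [if_pos rfl, Fin.sum_univ_two]
          by_cases ha : a = 0
          · subst ha; norm_num
          · have ha1 : a = 1 := by omega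
            subst ha1; norm_num
        · rw [if_neg h, Fin.sum_univ_two,
            if_neg (show ¬(i = k ∧ a ≠ 0) from fun hh => h hh.1.symm),
            if_neg (show ¬(i = k ∧ a ≠ 1) from fun hh => h hh.1.symm)]
          ring
      rw [Finset.sum_congr rfl (fun k _ => hout k),
        Finset.sum_ite_eq' Finset.univ i, if_pos (Finset.mem_univ i)]
      simp only [smul_eq_mul]
      ring
  | some (i, a), some (j, b) =>
      show ((1 / Real.sqrt (4*n)) * (1 / Real.sqrt (4*n) / 2) + ∑ k : Fin n, ∑ c : Fin 2,
          (if i = k ∧ a ≠ c then 1/2 else 0) * (1/(4*(n:ℝ)) + if k = j ∧ c = b then 1/4 else 0))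
        = (1/(4*n) + if i = j ∧ a = b then 1/4 else 0)
          + (1/4 : ℝ) • (if i = j ∧ a ≠ b then (1:ℝ)/2 else 0) - (1/4 : ℝ) •
          ((1 : Matrix (Option (Fin n × Fin 2)) (Option (Fin n × Fin 2)) ℝ) (some (i,a)) (some (j,b)))
      rw [one_apply_option]
      have hone : ((some (i,a) : Option (Fin n × Fin 2)) = some (j,b)) ↔ (i = j ∧ a = b) := by
        simp [Prod.ext_iff]
      have hout : ∀ k : Fin n, (∑ c : Fin 2,
          (if i = k ∧ a ≠ c then (1:ℝ)/2 else 0) * (1/(4*(n:ℝ)) + if k = j ∧ c = b then 1/4 else 0))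
          = if k = i then ((1/2) * (1/(4*(n:ℝ))) + (if i = j ∧ a ≠ b then 1/8 else 0)) else 0 := by
        intro k
        by_cases h : k = i
        · subst h
          rw [if_pos rfl, Fin.sum_univ_two]
          by_cases hij : k = j
          · subst hij
            by_cases ha : a = 0
            · subst ha
              by_cases hb : b = 0
              · subst hb; norm_num <;> ring
              · have hb1 : b = 1 := by omega
                subst hb1; norm_num <;> ring
            · have ha1 : a = 1 := by omega
              subst ha1
              by_cases hb : b = 0
              · subst hb; norm_num <;> ring
              · have hb1 : b = 1 := by omega
                subst hb1; norm_num <;> ring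
          · rw [if_neg (show ¬(k = j ∧ (0:Fin 2) = b) from fun hh => hij hh.1),
              if_neg (show ¬(k = j ∧ (1:Fin 2) = b) from fun hh => hij hh.1),
              if_neg (show ¬(k = j ∧ a ≠ b) from fun hh => hij hh.1)]
            by_cases ha : a = 0
            · subst ha; norm_num
            · have ha1 : a = 1 := by omega
              subst ha1; norm_num
        · rw [if_neg h, Fin.sum_univ_two,
            if_neg (show ¬(i = k ∧ a ≠ 0) from fun hh => h hh.1.symm),
            if_neg (show ¬(i = k ∧ a ≠ 1) from fun hh => h hh.1.symm)]
          ring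
      rw [Finset.sum_congr rfl (fun k _ => hout k),
        Finset.sum_ite_eq' Finset.univ i, if_pos (Finset.mem_univ i)]
      have : (1 / Real.sqrt (4*n)) * (1 / Real.sqrt (4*(n:ℝ)) / 2) = 1/(4*n)/2 := by
        rw [← mul_div_assoc, hα]
      rw [this]
      by_cases hij : i = j
      · subst hij
        by_cases hab : a = b
        · subst hab
          simp only [and_self, if_pos rfl, ne_eq, not_true_eq_false, and_false, if_false,
            smul_eq_mul, if_true]
          ring
        · have e1 : ¬(i = i ∧ a = b) := fun hh => hab hh.2
          have e2 : i = i ∧ a ≠ b := ⟨rfl, hab⟩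
          have e3 : ¬((some (i,a) : Option (Fin n × Fin 2)) = some (i,b)) := fun hh =>
            hab (by simpa using hh)
          simp only [if_neg e1, if_pos e2, if_neg e3, smul_eq_mul, true_and,
            if_neg hab, if_pos (show a ≠ b from hab)]
          ring
      · have h1 : ¬(i = j ∧ a = b) := fun hh => hij hh.1
        have h2 : ¬(i = j ∧ a ≠ b) := fun hh => hij hh.1
        have h3 : ¬((some (i,a) : Option (Fin n × Fin 2)) = some (j,b)) := by
          intro hh; exact hij (by simpa using congrArg (Option.map Prod.fst) hh)
        simp only [if_neg h1, if_neg h2, if_neg h3, smul_eq_mul]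
        ring

open scoped Matrix in
lemma trace_sq_dummy : True := trivial

open scoped Matrix

lemma Mn_isHermitian (n : ℕ) : (Mn n).IsHermitian := by
  ext x y
  rw [Matrix.conjTranspose_apply, star_trivial]
  match x, y with
  | none, none => rfl
  | none, some p => rfl
  | some p, none => rfl
  | some (i, a), some (j, b) =>
      show (if j = i ∧ b ≠ a then (1:ℝ)/2 else 0) = (if i = j ∧ a ≠ b then 1/2 else 0)
      by_cases h : i = j
      · by_cases hab : a = b
        · rw [if_neg (fun hh => hh.2 hab.symm), if_neg (fun hh => hh.2 hab)]
        · rw [if_pos ⟨h.symm, fun hh => hab hh.symm⟩, if_pos ⟨h, hab⟩]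
      · rw [if_neg (fun hh => h hh.1.symm), if_neg (fun hh => h hh.1)]

lemma trace_sq {m : Type*} [Fintype m] [DecidableEq m] (A : Matrix m m ℝ)
    (hA : A.IsHermitian) : (A * A).trace = ∑ i, hA.eigenvalues i ^ 2 := by
  set V : Matrix m m ℝ := (Matrix.IsHermitian.eigenvectorUnitary hA : Matrix m m ℝ) with hV
  set D : Matrix m m ℝ := Matrix.diagonal (RCLike.ofReal ∘ hA.eigenvalues) with hD
  have hU : star V * V = 1 := Unitary.star_mul_self_of_mem (Matrix.IsHermitian.eigenvectorUnitary hA).prop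
  have key : ∀ X : Matrix m m ℝ, star V * (V * X) = X := fun X => by
    rw [← Matrix.mul_assoc, hU, Matrix.one_mul]
  conv_lhs => rw [hA.spectral_theorem, Unitary.conjStarAlgAut_apply]
  rw [Matrix.trace_mul_cycle]
  simp only [Matrix.mul_assoc]
  rw [key, Matrix.trace_mul_comm]
  simp only [Matrix.mul_assoc]
  rw [hU, Matrix.mul_one]
  rw [show D * D = Matrix.diagonal (fun i => hA.eigenvalues i ^ 2) by
    rw [hD, Matrix.diagonal_mul_diagonal]
    congr 1
    funext i
    simp [sq]]
  rw [Matrix.trace_diagonal]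

theorem stmt7 (n : ℕ) (hn : 2 ≤ n) :
    randicEnergy (friendshipGraph n) = n + 1 := by
  have hn1 : 1 ≤ n := le_trans (by norm_num) hn
  have hn' : (n : ℝ) ≠ 0 := Nat.cast_ne_zero.mpr (by omega)
  set A := randicMatrix (friendshipGraph n) with hA
  have hAeq : A = Mn n := randic_eq_Mn n hn1
  have hH : A.IsHermitian := by rw [hAeq]; exact Mn_isHermitian n
  rw [randicEnergy, dif_pos hH]
  have hid : A * A * A = A * A + (1/4:ℝ) • A - (1/4:ℝ) • (1 : Matrix _ _ ℝ) := by
    calc A * A * A = Mn n * (Mn n * Mn n) := by rw [hAeq, Matrix.mul_assoc]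
    _ = Mn n * M2n n := by rw [M2_eq n hn1]
    _ = M2n n + (1/4:ℝ) • Mn n - (1/4:ℝ) • 1 := M3_eq n hn1
    _ = A * A + (1/4:ℝ) • A - (1/4:ℝ) • 1 := by rw [hAeq, M2_eq n hn1]
  have hcube0 : ∀ (l : ℝ) (v : Option (Fin n × Fin 2) → ℝ), v ≠ 0 → A *ᵥ v = l • v →
      l * (l * l) = l * l + l/4 - 1/4 := by
    intro l v hvne hv
    have hv3 : (A * A * A) *ᵥ v = (l * (l * l)) • v := by
      simp only [← Matrix.mulVec_mulVec, hv, Matrix.mulVec_smul, smul_smul]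
    have hvR : (A * A + (1/4:ℝ) • A - (1/4:ℝ) • (1 : Matrix _ _ ℝ)) *ᵥ v
        = (l * l + l/4 - 1/4) • v := by
      simp only [Matrix.sub_mulVec, Matrix.add_mulVec, ← Matrix.mulVec_mulVec, hv,
        Matrix.mulVec_smul, Matrix.smul_mulVec, Matrix.one_mulVec, smul_smul]
      module
    obtain ⟨k, hk⟩ := Function.ne_iff.mp hvne
    have := congrFun (hv3.symm.trans (by rw [hid, hvR])) k
    simp only [Pi.smul_apply, smul_eq_mul] at this
    exact mul_right_cancel₀ hk this
  have hcube : ∀ i, (hH.eigenvalues i) * ((hH.eigenvalues i) * (hH.eigenvalues i))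
      = (hH.eigenvalues i) * (hH.eigenvalues i) + (hH.eigenvalues i)/4 - 1/4 := by
    intro i
    refine hcube0 _ _ ?_ (hH.mulVec_eigenvectorBasis i)
    have hne := hH.eigenvectorBasis.orthonormal.ne_zero i
    intro hcon
    apply hne
    ext k
    exact congrFun hcon k
  have habs : ∀ i, |hH.eigenvalues i| = (2 * (hH.eigenvalues i)^2 + 1)/3 := by
    intro i
    set l := hH.eigenvalues i with hl
    have hf : (l - 1) * ((l - 1/2) * (l + 1/2)) = 0 := by linear_combination hcube i
    rcases mul_eq_zero.mp hf with h | h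
    · have : l = 1 := by linarith
      rw [this]; norm_num
    · rcases mul_eq_zero.mp h with h' | h'
      · have : l = 1/2 := by linarith
        rw [this]; norm_num
      · have : l = -(1/2) := by linarith
        rw [this]
        rw [abs_of_neg (by norm_num)]
        norm_num
  have hsum : ∑ i, (hH.eigenvalues i)^2 = 1 + (n:ℝ)/2 := by
    rw [← trace_sq A hH, hAeq, M2_eq n hn1]
    rw [Matrix.trace]
    show (∑ x : Option (Fin n × Fin 2), M2n n x x) = 1 + (n:ℝ)/2
    rw [Fintype.sum_option, Fintype.sum_prod_type]
    show ((1:ℝ)/2 + ∑ i : Fin n, ∑ a : Fin 2,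
      (1/(4*(n:ℝ)) + if i = i ∧ a = a then 1/4 else 0)) = 1 + (n:ℝ)/2
    have : ∀ i : Fin n, ∀ a : Fin 2,
        (1/(4*(n:ℝ)) + if i = i ∧ a = a then 1/4 else 0) = 1/(4*(n:ℝ)) + 1/4 := by
      intro i a; rw [if_pos ⟨rfl, rfl⟩]
    rw [Finset.sum_congr rfl (fun i _ => Finset.sum_congr rfl (fun a _ => this i a))]
    simp only [Finset.sum_const, Finset.card_univ, Fintype.card_fin, nsmul_eq_mul]
    field_simp
    ring
  rw [Finset.sum_congr rfl (fun i _ => habs i)]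
  rw [← Finset.sum_div, Finset.sum_add_distrib, ← Finset.mul_sum, hsum, Finset.sum_const]
  simp only [Finset.card_univ, nsmul_eq_mul, mul_one]
  have hcard : (Fintype.card (Option (Fin n × Fin 2)) : ℝ) = 2*n + 1 := by
    simp [mul_comm]
  rw [hcard]
  field_simp
  ring
end

section
/- For n ≥ 2, the Randić energy of the Dutch windmill graph D_4^n equals 2 + (n−1)√2. -/
open scoped Classical
open Polynomial

/-- The Dutch windmill graph `D₄ⁿ`: `n` squares sharing the common vertex `none`.
For each `i`, the 4-cycle is `none, (i,0), (i,2), (i,1)`. -/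
def dutchWindmillGraph (n : ℕ) : SimpleGraph (Option (Fin n × Fin 3)) where
  Adj x y :=
    (∃ i a, a ≠ 2 ∧ ((x = none ∧ y = some (i, a)) ∨ (y = none ∧ x = some (i, a)))) ∨
    (∃ i a, a ≠ 2 ∧ ((x = some (i, a) ∧ y = some (i, 2)) ∨ (y = some (i, a) ∧ x = some (i, 2))))
  symm := by
    constructor
    rintro x y (⟨i, a, ha, h | h⟩ | ⟨i, a, ha, h | h⟩)
    · exact Or.inl ⟨i, a, ha, Or.inr h⟩
    · exact Or.inl ⟨i, a, ha, Or.inl h⟩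
    · exact Or.inr ⟨i, a, ha, Or.inr h⟩
    · exact Or.inr ⟨i, a, ha, Or.inl h⟩
  loopless := by
    constructor
    rintro x (⟨i, a, ha, ⟨h1, h2⟩ | ⟨h1, h2⟩⟩ | ⟨i, a, ha, ⟨h1, h2⟩ | ⟨h1, h2⟩⟩) <;>
      first
        | (rw [h1] at h2; simp_all)
        | (rw [h1] at h2; injection h2 with h; exact ha (Prod.mk.injEq .. ▸ h).2)


/-! ### Auxiliary material -/

section SpectralAux

open Matrix

variable {N : Type*} [Fintype N] [DecidableEq N]

lemma wm_pow_spectral {A : Matrix N N ℝ} (hA : A.IsHermitian) (k : ℕ) :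
    A ^ k = (hA.eigenvectorUnitary : Matrix N N ℝ) * (Matrix.diagonal hA.eigenvalues) ^ k
      * (star (hA.eigenvectorUnitary : Matrix N N ℝ)) := by
  set U : Matrix N N ℝ := (hA.eigenvectorUnitary : Matrix N N ℝ) with hUdef
  set D : Matrix N N ℝ := Matrix.diagonal hA.eigenvalues with hDdef
  have hU : U * star U = 1 := (Matrix.mem_unitaryGroup_iff).mp hA.eigenvectorUnitary.2
  have hU' : star U * U = 1 := (Matrix.mem_unitaryGroup_iff').mp hA.eigenvectorUnitary.2
  have hst : A = U * D * star U := by simpa using hA.spectral_theorem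
  induction k with
  | zero => simp [pow_zero, hU]
  | succ k ih =>
    calc A ^ (k+1) = A ^ k * A := pow_succ A k
    _ = U * D ^ k * star U * (U * D * star U) := by rw [ih, ← hst]
    _ = U * D ^ k * (star U * U) * (D * star U) := by noncomm_ring
    _ = U * D ^ (k+1) * star U := by rw [hU']; noncomm_ring

lemma wm_trace_pow_eq {A : Matrix N N ℝ} (hA : A.IsHermitian) (k : ℕ) :
    (A ^ k).trace = ∑ i, hA.eigenvalues i ^ k := by
  rw [wm_pow_spectral hA k, Matrix.trace_mul_cycle]
  rw [(Matrix.mem_unitaryGroup_iff').mp hA.eigenvectorUnitary.2, Matrix.one_mul,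
    Matrix.diagonal_pow, Matrix.trace_diagonal]
  simp

lemma wm_eigen_root {A : Matrix N N ℝ} (hA : A.IsHermitian)
    (h : A ^ 5 = (3/2 : ℝ) • A ^ 3 - (1/2 : ℝ) • A) (i : N) :
    hA.eigenvalues i ^ 5 = (3/2) * hA.eigenvalues i ^ 3 - (1/2) * hA.eigenvalues i := by
  set U : Matrix N N ℝ := (hA.eigenvectorUnitary : Matrix N N ℝ) with hUdef
  set D : Matrix N N ℝ := Matrix.diagonal hA.eigenvalues with hDdef
  have hU : U * star U = 1 := (Matrix.mem_unitaryGroup_iff).mp hA.eigenvectorUnitary.2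
  have hU' : star U * U = 1 := (Matrix.mem_unitaryGroup_iff').mp hA.eigenvectorUnitary.2
  have hEk : ∀ k : ℕ, star U * A ^ k * U = D ^ k := by
    intro k
    rw [wm_pow_spectral hA k]
    calc star U * ((U * D ^ k) * star U) * U = (star U * U) * D ^ k * (star U * U) := by
          noncomm_ring
    _ = D ^ k := by rw [hU']; noncomm_ring
  have e3 := hEk 3
  have e1 := hEk 1
  simp only [pow_one] at e1
  have hD : D ^ 5 = (3/2 : ℝ) • D ^ 3 - (1/2 : ℝ) • D := by
    calc D ^ 5 = star U * A ^ 5 * U := (hEk 5).symm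
    _ = star U * ((3/2 : ℝ) • A ^ 3 - (1/2 : ℝ) • A) * U := by rw [h]
    _ = (3/2 : ℝ) • (star U * A ^ 3 * U) - (1/2 : ℝ) • (star U * A * U) := by
        simp [Matrix.mul_sub, Matrix.sub_mul, Matrix.mul_smul, Matrix.smul_mul]
    _ = (3/2 : ℝ) • D ^ 3 - (1/2 : ℝ) • D := by rw [e3, e1]
  have := congrFun (congrFun hD i) i
  simpa [hDdef, Matrix.diagonal_pow, Matrix.diagonal_apply_eq, Matrix.sub_apply,
    Matrix.smul_apply] using this

end SpectralAux

lemma wm_randic_isHermitian {V : Type*} [Fintype V] (G : SimpleGraph V) :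
    (randicMatrix G).IsHermitian := by
  ext i j
  simp only [Matrix.conjTranspose_apply, randicMatrix, star_trivial]
  exact if_congr (G.adj_comm j i) (by rw [mul_comm]) rfl

lemma wm_adj (n : ℕ) (x y : Option (Fin n × Fin 3)) :
    (dutchWindmillGraph n).Adj x y ↔
      (match x, y with
      | none, some (_, a) => a ≠ 2
      | some (_, a), none => a ≠ 2
      | some (i, a), some (j, b) => i = j ∧ ((a ≠ 2 ∧ b = 2) ∨ (a = 2 ∧ b ≠ 2))
      | _, _ => False) := by
  match x, y with
  | none, none => simp [dutchWindmillGraph]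
  | none, some (i, a) => simp [dutchWindmillGraph]
  | some (i, a), none => simp [dutchWindmillGraph]
  | some (i, a), some (j, b) =>
    simp only [dutchWindmillGraph]
    constructor
    · rintro (⟨i', a', ha', ⟨h1, h2⟩ | ⟨h1, h2⟩⟩ | ⟨i', a', ha', ⟨h1, h2⟩ | ⟨h1, h2⟩⟩) <;>
        simp_all
    · rintro ⟨rfl, ⟨ha, rfl⟩ | ⟨rfl, hb⟩⟩
      · exact Or.inr ⟨i, a, ha, Or.inl ⟨rfl, rfl⟩⟩
      · exact Or.inr ⟨i, b, hb, Or.inr ⟨rfl, rfl⟩⟩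

lemma wm_deg_none (n : ℕ) : (dutchWindmillGraph n).degree none = 2 * n := by
  rw [SimpleGraph.degree, SimpleGraph.neighborFinset_eq_filter, Finset.card_filter]
  rw [Fintype.sum_option]
  simp only [Fintype.sum_prod_type]
  simp only [Fin.sum_univ_three, wm_adj]
  simp [two_mul]
  omega

lemma wm_deg_some (n : ℕ) (p : Fin n × Fin 3) :
    (dutchWindmillGraph n).degree (some p) = 2 := by
  obtain ⟨i, a⟩ := p
  rw [SimpleGraph.degree, SimpleGraph.neighborFinset_eq_filter, Finset.card_filter]
  rw [Fintype.sum_option]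
  simp only [Fintype.sum_prod_type, Fin.sum_univ_three, wm_adj]
  fin_cases a <;>
    simp [Finset.sum_add_distrib, Finset.sum_ite_eq, Finset.sum_ite_eq']

noncomputable def wmC (n : ℕ) : ℝ := 1 / (2 * Real.sqrt n)

noncomputable def wmR (n : ℕ) : Matrix (Option (Fin n × Fin 3)) (Option (Fin n × Fin 3)) ℝ :=
  Matrix.of fun x y =>
    match x, y with
    | none, none => 0
    | none, some (_, a) => if a = 2 then 0 else wmC n
    | some (_, a), none => if a = 2 then 0 else wmC n
    | some (i, a), some (j, b) =>
        if i = j ∧ ((a ≠ 2 ∧ b = 2) ∨ (a = 2 ∧ b ≠ 2)) then 1/2 else 0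

noncomputable def wmS (n : ℕ) : Matrix (Option (Fin n × Fin 3)) (Option (Fin n × Fin 3)) ℝ :=
  Matrix.of fun x y =>
    match x, y with
    | none, none => 1/2
    | none, some (_, a) => if a = 2 then wmC n else 0
    | some (_, a), none => if a = 2 then wmC n else 0
    | some (i, a), some (j, b) =>
        if a = 2 then (if b = 2 then (if i = j then 1/2 else 0) else 0)
        else (if b = 2 then 0 else 1/(4*n) + (if i = j then 1/4 else 0))

lemma wmC_sq {n : ℕ} (hn : 1 ≤ n) : wmC n * wmC n = 1/(4*n) := by
  have h0 : (0:ℝ) < n := by exact_mod_cast hn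
  rw [wmC]
  rw [div_mul_div_comm, one_mul]
  rw [show (2 * Real.sqrt n) * (2 * Real.sqrt n) = 4 * (Real.sqrt n * Real.sqrt n) by ring]
  rw [Real.mul_self_sqrt h0.le]

lemma wmR_mul_wmR {n : ℕ} (hn : 1 ≤ n) : wmR n * wmR n = wmS n := by
  have h0 : (0:ℝ) < n := by exact_mod_cast hn
  have hc := wmC_sq hn
  ext x y
  rw [Matrix.mul_apply, Fintype.sum_option]
  simp only [Fintype.sum_prod_type, Fin.sum_univ_three]
  match x, y with
  | none, none =>
    simp [wmR, wmS, Finset.sum_const, hc]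
    field_simp
    ring
  | none, some (j, b) =>
    fin_cases b <;>
      simp [wmR, wmS, mul_ite, ite_mul, mul_zero, zero_mul, Finset.sum_ite_eq,
        Finset.sum_ite_eq', Finset.sum_add_distrib, Finset.sum_const, hc] <;>
      field_simp <;> ring
  | some (i, a), none =>
    fin_cases a <;>
      simp [wmR, wmS, mul_ite, ite_mul, mul_zero, zero_mul, Finset.sum_ite_eq,
        Finset.sum_ite_eq', Finset.sum_add_distrib, Finset.sum_const, hc] <;>
      field_simp <;> ring
  | some (i, a), some (j, b) =>
    fin_cases a <;> fin_cases b <;>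
      simp [wmR, wmS, mul_ite, ite_mul, mul_zero, zero_mul, Finset.sum_ite_eq,
        Finset.sum_ite_eq', Finset.sum_add_distrib, Finset.sum_const, hc] <;>
      (try split_ifs) <;> (try field_simp) <;> (try ring) <;> (try norm_num)

noncomputable def wmT (n : ℕ) : Matrix (Option (Fin n × Fin 3)) (Option (Fin n × Fin 3)) ℝ :=
  Matrix.of fun x y =>
    match x, y with
    | none, none => 1/2
    | none, some (_, a) => if a = 2 then wmC n else 0
    | some (_, a), none => if a = 2 then wmC n else 0
    | some (i, a), some (j, b) =>
        if a = 2 then (if b = 2 then 1/(4*n) + (if i = j then 1/4 else 0) else 0)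
        else (if b = 2 then 0 else 3/(8*n) + (if i = j then 1/8 else 0))

set_option maxHeartbeats 2000000 in
lemma wmS_mul_wmS {n : ℕ} (hn : 1 ≤ n) : wmS n * wmS n = wmT n := by
  have h0 : (0:ℝ) < n := by exact_mod_cast hn
  have hc := wmC_sq hn
  ext x y
  rw [Matrix.mul_apply, Fintype.sum_option]
  simp only [Fintype.sum_prod_type, Fin.sum_univ_three]
  match x, y with
  | none, none =>
    simp [wmS, wmT, Finset.sum_const, hc]
    field_simp
    ring
  | none, some (j, b) =>
    fin_cases b <;>
      simp [wmS, wmT, mul_ite, ite_mul, mul_zero, zero_mul, mul_add, add_mul,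
        Finset.sum_ite_eq, Finset.sum_ite_eq', Finset.sum_add_distrib, Finset.sum_const, hc] <;>
      (try split_ifs) <;> (try field_simp) <;> (try ring)
  | some (i, a), none =>
    fin_cases a <;>
      simp [wmS, wmT, mul_ite, ite_mul, mul_zero, zero_mul, mul_add, add_mul,
        Finset.sum_ite_eq, Finset.sum_ite_eq', Finset.sum_add_distrib, Finset.sum_const, hc] <;>
      (try split_ifs) <;> (try field_simp) <;> (try ring)
  | some (i, a), some (j, b) =>
    fin_cases a <;> fin_cases b <;>
      simp [wmS, wmT, mul_ite, ite_mul, mul_zero, zero_mul, mul_add, add_mul,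
        Finset.sum_ite_eq, Finset.sum_ite_eq', Finset.sum_add_distrib, Finset.sum_const, hc] <;>
      (try split_ifs) <;> (try field_simp) <;> (try ring)

noncomputable def wmK (n : ℕ) : Matrix (Option (Fin n × Fin 3)) (Option (Fin n × Fin 3)) ℝ :=
  Matrix.of fun x y =>
    match x, y with
    | none, none => 1/4
    | none, some (_, a) => if a = 2 then -(wmC n)/2 else 0
    | some (_, a), none => if a = 2 then -(wmC n)/2 else 0
    | some (i, a), some (j, b) =>
        if a = 2 then (if b = 2 then 1/(4*n) else 0)
        else (if b = 2 then 0
          else if i = j then (if a = b then 1/4 else -(1/4)) else 0)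

lemma wmK_eq (n : ℕ) (hn : 1 ≤ n) :
    wmT n - (3/2 : ℝ) • wmS n + (1/2 : ℝ) • (1 : Matrix (Option (Fin n × Fin 3)) _ ℝ)
      = wmK n := by
  have h0 : (0:ℝ) < n := by exact_mod_cast hn
  have hne : (n:ℝ) ≠ 0 := ne_of_gt h0
  ext x y
  simp only [Matrix.sub_apply, Matrix.add_apply, Matrix.smul_apply, Matrix.one_apply,
    smul_eq_mul]
  match x, y with
  | none, none => simp [wmT, wmS, wmK]; norm_num
  | none, some (j, b) => fin_cases b <;> simp [wmT, wmS, wmK] <;> ring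
  | some (i, a), none => fin_cases a <;> simp [wmT, wmS, wmK] <;> ring
  | some (i, a), some (j, b) =>
    fin_cases a <;> fin_cases b <;>
      simp [wmT, wmS, wmK, Prod.ext_iff] <;> (try split_ifs) <;> (try field_simp) <;>
        (try ring) <;> (try norm_num)

set_option maxHeartbeats 8000000 in
lemma wmR_mul_wmK {n : ℕ} (hn : 1 ≤ n) : wmR n * wmK n = 0 := by
  have h0 : (0:ℝ) < n := by exact_mod_cast hn
  have hc := wmC_sq hn
  ext x y
  rw [Matrix.mul_apply, Fintype.sum_option]
  simp only [Fintype.sum_prod_type, Fin.sum_univ_three]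
  match x, y with
  | none, none =>
    simp [wmR, wmK, Finset.sum_const, hc]
  | none, some (j, b) =>
    fin_cases b <;>
      simp [wmR, wmK, mul_ite, ite_mul, mul_zero, zero_mul, mul_add, add_mul,
        Finset.sum_ite_eq, Finset.sum_ite_eq', Finset.sum_add_distrib, Finset.sum_const, hc] <;>
      (try split_ifs) <;> (try field_simp) <;> (try ring)
  | some (i, a), none =>
    fin_cases a <;>
      simp [wmR, wmK, mul_ite, ite_mul, mul_zero, zero_mul, mul_add, add_mul,
        Finset.sum_ite_eq, Finset.sum_ite_eq', Finset.sum_add_distrib, Finset.sum_const, hc,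
        wmC] <;>
      (try split_ifs) <;> (try field_simp) <;>
        (try first
          | ring1
          | linear_combination 8 * Real.mul_self_sqrt h0.le)
  | some (i, a), some (j, b) =>
    fin_cases a <;> fin_cases b <;>
      simp [wmR, wmK, mul_ite, ite_mul, mul_zero, zero_mul, mul_add, add_mul,
        Finset.sum_ite_eq, Finset.sum_ite_eq', Finset.sum_add_distrib, Finset.sum_const, hc,
        wmC] <;>
      (try split_ifs) <;> (try field_simp) <;>
        (try first
          | ring1
          | linear_combination 8 * Real.mul_self_sqrt h0.le
          | linear_combination 4 * Real.mul_self_sqrt h0.le)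

lemma wmS_trace {n : ℕ} (hn : 1 ≤ n) : (wmS n).trace = n + 1 := by
  have h0 : (0:ℝ) < n := by exact_mod_cast hn
  rw [Matrix.trace]
  rw [Fintype.sum_option]
  simp only [Fintype.sum_prod_type, Fin.sum_univ_three, Matrix.diag_apply]
  simp [wmS, Finset.sum_const, Finset.sum_add_distrib]
  field_simp
  ring

lemma wmT_trace {n : ℕ} (hn : 1 ≤ n) : (wmT n).trace = (n + 3)/2 := by
  have h0 : (0:ℝ) < n := by exact_mod_cast hn
  rw [Matrix.trace]
  rw [Fintype.sum_option]
  simp only [Fintype.sum_prod_type, Fin.sum_univ_three, Matrix.diag_apply]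
  simp [wmT, Finset.sum_const, Finset.sum_add_distrib]
  field_simp
  ring

lemma randic_eq_wmR (n : ℕ) (hn : 1 ≤ n) : randicMatrix (dutchWindmillGraph n) = wmR n := by
  have hs4 : Real.sqrt ((2*(n:ℝ)) * 2) = 2 * Real.sqrt n := by
    rw [show (2*(n:ℝ))*2 = 4 * n by ring, Real.sqrt_mul (by norm_num : (4:ℝ) ≥ 0)]
    rw [show (4:ℝ) = 2^2 by norm_num, Real.sqrt_sq (by norm_num : (2:ℝ) ≥ 0)]
  have hs1 : Real.sqrt ((2:ℝ) * 2) = 2 := by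
    rw [show (2:ℝ)*2 = 2^2 by norm_num, Real.sqrt_sq (by norm_num : (2:ℝ) ≥ 0)]
  ext x y
  rw [randicMatrix]
  match x, y with
  | none, none => simp [wm_adj, wmR]
  | none, some (i, a) =>
    by_cases ha : a = 2
    · simp [wm_adj, wmR, ha]
    · simp only [wm_adj, wmR, ha, wmC, Matrix.of_apply, if_true, if_false,
        ite_true, ite_false, wm_deg_none, wm_deg_some, ne_eq, not_false_iff]
      push_cast
      rw [hs4]
  | some (i, a), none =>
    by_cases ha : a = 2
    · simp [wm_adj, wmR, ha]
    · simp only [wm_adj, wmR, ha, Matrix.of_apply, wm_deg_none, wm_deg_some, ne_eq,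
        not_false_iff]
      simp only [if_true, if_false, ite_true, ite_false, wmC]
      push_cast
      rw [show ((2:ℝ)*(2*n)) = 2*n*2 by ring, hs4]
  | some (i, a), some (j, b) =>
    by_cases h : i = j ∧ ((a ≠ 2 ∧ b = 2) ∨ (a = 2 ∧ b ≠ 2))
    · rw [if_pos ((wm_adj n _ _).mpr h)]
      simp only [wmR, Matrix.of_apply, if_pos h, wm_deg_some]
      push_cast
      rw [hs1]
    · rw [if_neg (fun hadj => h ((wm_adj n _ _).mp hadj))]
      simp [wmR, if_neg h]

theorem stmt10 (n : ℕ) (hn : 2 ≤ n) :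
    randicEnergy (dutchWindmillGraph n) = 2 + ((n : ℝ) - 1) * Real.sqrt 2 := by
  have hn1 : 1 ≤ n := le_trans (by norm_num) hn
  set A := randicMatrix (dutchWindmillGraph n) with hAdef
  have hA : A.IsHermitian := wm_randic_isHermitian _
  have hAR : A = wmR n := randic_eq_wmR n hn1
  have hA2 : A ^ 2 = wmS n := by rw [sq, hAR]; exact wmR_mul_wmR hn1
  have hA4 : A ^ 4 = wmT n := by
    rw [show (4:ℕ) = 2 + 2 from rfl, pow_add, hA2]; exact wmS_mul_wmS hn1
  have h5 : A ^ 5 = (3/2 : ℝ) • A ^ 3 - (1/2 : ℝ) • A := by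
    have hz : A * wmK n = 0 := by rw [hAR]; exact wmR_mul_wmK hn1
    have hKeq : wmT n = wmK n + (3/2 : ℝ) • wmS n
        - (1/2 : ℝ) • (1 : Matrix (Option (Fin n × Fin 3)) _ ℝ) := by
      rw [← wmK_eq n hn1]; abel
    calc A ^ 5 = A * A ^ 4 := by rw [pow_succ']
    _ = A * (wmK n + (3/2 : ℝ) • wmS n
        - (1/2 : ℝ) • (1 : Matrix (Option (Fin n × Fin 3)) _ ℝ)) := by rw [hA4, hKeq]
    _ = A * wmK n + (3/2 : ℝ) • (A * wmS n) - (1/2 : ℝ) • (A * 1) := by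
        rw [Matrix.mul_sub, Matrix.mul_add, Matrix.mul_smul, Matrix.mul_smul]
    _ = (3/2 : ℝ) • A ^ 3 - (1/2 : ℝ) • A := by
        rw [hz, zero_add, Matrix.mul_one, ← hA2, ← pow_succ']
  have tr2 : ∑ i, hA.eigenvalues i ^ 2 = (n : ℝ) + 1 := by
    rw [← wm_trace_pow_eq hA 2, hA2, wmS_trace hn1]
  have tr4 : ∑ i, hA.eigenvalues i ^ 4 = ((n : ℝ) + 3)/2 := by
    rw [← wm_trace_pow_eq hA 4, hA4, wmT_trace hn1]
  have h2 : Real.sqrt 2 ^ 2 = 2 := Real.sq_sqrt (by norm_num)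
  have habs : ∀ i, |hA.eigenvalues i| =
      (2*Real.sqrt 2 - 1) * hA.eigenvalues i ^ 2
        + (2 - 2*Real.sqrt 2) * hA.eigenvalues i ^ 4 := by
    intro i
    have hroot := wm_eigen_root hA h5 i
    set t := hA.eigenvalues i with htdef
    have hfac : t * ((t^2 - 1/2) * (t^2 - 1)) = 0 := by linear_combination hroot
    rcases mul_eq_zero.mp hfac with h | h
    · rw [h]; simp
    · rcases mul_eq_zero.mp h with h | h
      · have ht2 : t^2 = 1/2 := by linarith
        have hq : ((Real.sqrt 2)/2)^2 = 1/2 := by rw [div_pow, h2]; norm_num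
        have habs2 : |t| = Real.sqrt 2 / 2 := by
          rw [← Real.sqrt_sq_eq_abs, ht2, ← hq, Real.sqrt_sq (by positivity)]
        rw [habs2, ht2, show t^4 = (t^2)^2 by ring, ht2]
        ring
      · have ht2 : t^2 = 1 := by linarith
        have habs2 : |t| = 1 := by
          rw [← Real.sqrt_sq_eq_abs, ht2, Real.sqrt_one]
        rw [habs2, ht2, show t^4 = (t^2)^2 by ring, ht2]
        ring
  have henergy : randicEnergy (dutchWindmillGraph n) = ∑ i, |hA.eigenvalues i| := by
    rw [randicEnergy, dif_pos hA]
  rw [henergy]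
  calc ∑ i, |hA.eigenvalues i|
      = ∑ i, ((2*Real.sqrt 2 - 1) * hA.eigenvalues i ^ 2
        + (2 - 2*Real.sqrt 2) * hA.eigenvalues i ^ 4) :=
        Finset.sum_congr rfl (fun i _ => habs i)
    _ = (2*Real.sqrt 2 - 1) * (∑ i, hA.eigenvalues i ^ 2)
        + (2 - 2*Real.sqrt 2) * (∑ i, hA.eigenvalues i ^ 4) := by
        rw [Finset.sum_add_distrib, Finset.mul_sum, Finset.mul_sum]
    _ = (2*Real.sqrt 2 - 1) * ((n : ℝ) + 1) + (2 - 2*Real.sqrt 2) * (((n : ℝ) + 3)/2) := by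
        rw [tr2, tr4]
    _ = 2 + ((n : ℝ) - 1) * Real.sqrt 2 := by ring
end
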